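/- (Theorem 2, achievability.) Let K ≥ 2 and 1 ≤ M < N be integers, and let g_1,…,g_N ∈ ℂ^M be vectors such that every subset of {g_1,…,g_N} of cardinality at most M is linearly independent. Set τ3 = ⌈(K−1)·N/M⌉. Then there exist pilot symbols a_{k,i} ∈ {0,1} (k = 2,…,K, i = 1,…,τ3) and reflection coefficients φ_{n,i} ∈ {0,1} (n = 1,…,N, i = 1,…,τ3) such that the Phase III observation map L is injective; that is, all (K−1)·N scaling factors λ_{k,n} can be perfectly recovered from τ3 = ⌈(K−1)·N/M⌉ noiseless received signals. -/

import Mathlib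

private lemma p3_interval {M : ℕ} (hM : 0 < M) (p : ℕ) :
    (p / M) * M ≤ p ∧ p < (p / M) * M + M := by
  constructor
  · exact Nat.div_mul_le_self p M
  · have h1 : M * (p / M) + p % M < M * (p / M) + M :=
      Nat.add_lt_add_left (Nat.mod_lt p hM) _
    rw [Nat.div_add_mod] at h1
    rw [mul_comm (p / M) M]
    exact h1

private lemma p3_pair_inj {N k1 k2 n1 n2 : ℕ} (h1 : n1 < N) (h2 : n2 < N)
    (h : k1 * N + n1 = k2 * N + n2) : k1 = k2 ∧ n1 = n2 := by
  have hN : 0 < N := by omega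
  have e1 : (k1 * N + n1) / N = k1 := by
    rw [mul_comm, Nat.mul_add_div hN, Nat.div_eq_of_lt h1, add_zero]
  have e2 : (k2 * N + n2) / N = k2 := by
    rw [mul_comm, Nat.mul_add_div hN, Nat.div_eq_of_lt h2, add_zero]
  have hk : k1 = k2 := by rw [← e1, ← e2, h]
  subst hk
  exact ⟨rfl, Nat.add_left_cancel h⟩

open Classical in
/-- The combinatorial heart: for a fixed IRS element `n`, the per-slot equations
force all the differences `c k` to vanish. -/
private lemma p3_comb {M N Km : ℕ} (hM : 0 < M) (hMN : M < N) (n : Fin N)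
    (c : Fin Km → ℂ)
    (heq : ∀ k : Fin Km, ∑ k' : Fin Km,
      (if ∃ n' : Fin N, (k'.val * N + n'.val) / M = (k.val * N + n.val) / M
        then (1:ℂ) else 0) * c k' = 0) :
    ∀ k, c k = 0 := by
  -- closeness of members of one slot
  have hclose : ∀ p q : ℕ, p / M = q / M → p < q + M := by
    intro p q h
    have h1 := (p3_interval hM p).2
    have h2 := (p3_interval hM q).1
    rw [h] at h1
    exact lt_of_lt_of_le h1 (Nat.add_le_add_right h2 M)
  -- users sharing a slot are neighbors
  have hfar : ∀ k' k : Fin Km,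
      (∃ n' : Fin N, (k'.val * N + n'.val) / M = (k.val * N + n.val) / M) →
      k'.val = k.val ∨ k'.val = k.val + 1 ∨ k'.val + 1 = k.val := by
    rintro k' k ⟨n', hn'⟩
    by_contra hc
    push_neg at hc
    have c1 := hclose _ _ hn'
    have c2 := hclose _ _ hn'.symm
    have hnlt := n.isLt
    have hnlt' := n'.isLt
    rcases (by omega : k.val + 2 ≤ k'.val ∨ k'.val + 2 ≤ k.val) with h | h
    · have hmul : (k.val + 2) * N ≤ k'.val * N := Nat.mul_le_mul_right N h
      rw [add_mul] at hmul
      generalize hA : k.val * N = A at c1 c2 hmul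
      generalize hB : k'.val * N = B at c1 c2 hmul
      omega
    · have hmul : (k'.val + 2) * N ≤ k.val * N := Nat.mul_le_mul_right N h
      rw [add_mul] at hmul
      generalize hA : k.val * N = A at c1 c2 hmul
      generalize hB : k'.val * N = B at c1 c2 hmul
      omega
  -- a slot containing points of users k and k+1 contains the boundary point (k+1)*N
  have hbdry : ∀ (k k' : Fin Km) (n₁ n₂ : Fin N), k'.val = k.val + 1 →
      (k'.val * N + n₂.val) / M = (k.val * N + n₁.val) / M →
      ((k.val + 1) * N) / M = (k.val * N + n₁.val) / M := by
    intro k k' n₁ n₂ hk h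
    have h1 := (p3_interval hM (k.val * N + n₁.val)).1
    have h2 := (p3_interval hM (k.val * N + n₁.val)).2
    have h3 := (p3_interval hM (k'.val * N + n₂.val)).1
    have h4 := (p3_interval hM (k'.val * N + n₂.val)).2
    rw [h] at h3 h4
    apply Nat.div_eq_of_lt_le
    · -- (k*N+n1)/M * M ≤ (k+1)*N
      have e : (k.val + 1) * N = k.val * N + N := by ring
      have e' : k'.val * N = k.val * N + N := by rw [hk]; ring
      rw [e' ] at h3 h4
      rw [e]
      have hn1 := n₁.isLt
      generalize hA : k.val * N = A at h1 h2 h3 h4 ⊢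
      generalize hS : (A + n₁.val) / M * M = S at h1 h2 h3 h4 ⊢
      omega
    · have e : (k.val + 1) * N = k.val * N + N := by ring
      have e' : k'.val * N = k.val * N + N := by rw [hk]; ring
      have e2 : ((k.val * N + n₁.val) / M + 1) * M = (k.val * N + n₁.val) / M * M + M := by
        ring
      rw [e'] at h3 h4
      rw [e2, e]
      have hn1 := n₁.isLt
      generalize hA : k.val * N = A at h1 h2 h3 h4 ⊢
      generalize hS : (A + n₁.val) / M * M = S at h1 h2 h3 h4 ⊢
      omega
  -- slots of (k,n) and (k+1,n) differ
  have hne : ∀ k k' : Fin Km, k'.val = k.val + 1 →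
      (k.val * N + n.val) / M ≠ (k'.val * N + n.val) / M := by
    intro k k' hk h
    have c1 := hclose _ _ h.symm
    have e' : k'.val * N = k.val * N + N := by rw [hk]; ring
    rw [e'] at c1
    generalize hA : k.val * N = A at c1
    omega
  -- incompatibility of up-link at k and down-link at k+1
  have hNoUD : ∀ k k' : Fin Km, k'.val = k.val + 1 →
      (∃ n' : Fin N, (k'.val * N + n'.val) / M = (k.val * N + n.val) / M) →
      (∃ n' : Fin N, (k.val * N + n'.val) / M = (k'.val * N + n.val) / M) →
      False := by
    rintro k k' hk ⟨n1, h1⟩ ⟨n2, h2⟩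
    have b1 := hbdry k k' n n1 hk h1
    have b2 := hbdry k k' n2 n hk h2.symm
    exact hne k k' hk (b1.symm.trans (b2.trans h2))
  -- incompatibility of up-link and down-link at the same k
  have hExcl : ∀ k k' k'' : Fin Km, k'.val = k.val + 1 → k''.val + 1 = k.val →
      (∃ n' : Fin N, (k'.val * N + n'.val) / M = (k.val * N + n.val) / M) →
      (∃ n' : Fin N, (k''.val * N + n'.val) / M = (k.val * N + n.val) / M) →
      False := by
    rintro k k' k'' hk' hk'' ⟨n1, h1⟩ ⟨n2, h2⟩
    have c1 := hclose _ _ (h1.trans h2.symm)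
    have e1 : k'.val * N = k.val * N + N := by rw [hk']; ring
    have e2 : k''.val * N + N = k.val * N := by rw [← hk'']; ring
    have hn1 := n1.isLt
    have hn2 := n2.isLt
    rw [e1] at c1
    generalize hA : k.val * N = A at c1 e2
    generalize hB : k''.val * N = B at c1 e2
    omega
  -- the three evaluations of the slot equation
  have hQself : ∀ k : Fin Km,
      ∃ n' : Fin N, (k.val * N + n'.val) / M = (k.val * N + n.val) / M := fun k => ⟨n, rfl⟩
  have hpure : ∀ k : Fin Km,
      (¬∃ k' : Fin Km, k'.val = k.val + 1 ∧
        ∃ n' : Fin N, (k'.val * N + n'.val) / M = (k.val * N + n.val) / M) →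
      (¬∃ k' : Fin Km, k'.val + 1 = k.val ∧
        ∃ n' : Fin N, (k'.val * N + n'.val) / M = (k.val * N + n.val) / M) →
      c k = 0 := by
    intro k hUp hDown
    have h := heq k
    rw [Finset.sum_eq_single k] at h
    · rwa [if_pos (hQself k), one_mul] at h
    · intro b _ hbk
      rw [if_neg, zero_mul]
      intro hQ
      rcases hfar b k hQ with h1 | h1 | h1
      · exact hbk (Fin.ext h1)
      · exact hUp ⟨b, h1, hQ⟩
      · exact hDown ⟨b, h1, hQ⟩
    · intro hk; exact absurd (Finset.mem_univ k) hk
  have hup : ∀ k k' : Fin Km, k'.val = k.val + 1 →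
      (∃ n' : Fin N, (k'.val * N + n'.val) / M = (k.val * N + n.val) / M) →
      c k + c k' = 0 := by
    intro k k' hk hQ
    have hkk' : k ≠ k' := by intro h; rw [h] at hk; omega
    have h := heq k
    rw [← Finset.sum_subset (Finset.subset_univ {k, k'}) ?van, Finset.sum_pair hkk',
      if_pos (hQself k), if_pos hQ, one_mul, one_mul] at h
    · exact h
    case van =>
      intro b _ hb
      simp only [Finset.mem_insert, Finset.mem_singleton, not_or] at hb
      rw [if_neg, zero_mul]
      intro hQb
      rcases hfar b k hQb with h1 | h1 | h1
      · exact hb.1 (Fin.ext h1)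
      · exact hb.2 (Fin.ext (by omega))
      · exact hExcl k k' b hk h1 hQ hQb
  have hdown : ∀ k k' : Fin Km, k'.val + 1 = k.val →
      (∃ n' : Fin N, (k'.val * N + n'.val) / M = (k.val * N + n.val) / M) →
      c k' + c k = 0 := by
    intro k k' hk hQ
    have hkk' : k' ≠ k := by intro h; rw [h] at hk; omega
    have h := heq k
    rw [← Finset.sum_subset (Finset.subset_univ {k', k}) ?van, Finset.sum_pair hkk',
      if_pos hQ, if_pos (hQself k), one_mul, one_mul] at h
    · exact h
    case van =>
      intro b _ hb
      simp only [Finset.mem_insert, Finset.mem_singleton, not_or] at hb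
      rw [if_neg, zero_mul]
      intro hQb
      rcases hfar b k hQb with h1 | h1 | h1
      · exact hb.2 (Fin.ext h1)
      · exact hExcl k b k' h1 hk hQb hQ
      · exact hb.1 (Fin.ext (by omega))
  -- upward-closed induction: no up-link ⇒ zero
  have hA : ∀ j : ℕ, ∀ k : Fin Km, k.val ≤ j →
      (¬∃ k' : Fin Km, k'.val = k.val + 1 ∧
        ∃ n' : Fin N, (k'.val * N + n'.val) / M = (k.val * N + n.val) / M) →
      c k = 0 := by
    intro j
    induction j with
    | zero =>
      intro k hk hnup
      apply hpure k hnup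
      rintro ⟨k', hk', -⟩
      omega
    | succ j ih =>
      intro k hk hnup
      by_cases hdn : ∃ k' : Fin Km, k'.val + 1 = k.val ∧
          ∃ n' : Fin N, (k'.val * N + n'.val) / M = (k.val * N + n.val) / M
      · obtain ⟨k', hk', hQ'⟩ := hdn
        have h1 := hdown k k' hk' hQ'
        have hnup' : ¬∃ k'' : Fin Km, k''.val = k'.val + 1 ∧
            ∃ n' : Fin N, (k''.val * N + n'.val) / M = (k'.val * N + n.val) / M := by
          rintro ⟨k'', hk'', hQ''⟩
          have hkk : k'' = k := Fin.ext (by omega)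
          rw [hkk] at hQ''
          exact hNoUD k' k (by omega) hQ'' hQ'
        have h2 := ih k' (by omega) hnup'
        rw [h2, zero_add] at h1
        exact h1
      · exact hpure k hnup hdn
  -- downward-closed induction: no down-link ⇒ zero
  have hB : ∀ j : ℕ, ∀ k : Fin Km, Km ≤ k.val + 1 + j →
      (¬∃ k' : Fin Km, k'.val + 1 = k.val ∧
        ∃ n' : Fin N, (k'.val * N + n'.val) / M = (k.val * N + n.val) / M) →
      c k = 0 := by
    intro j
    induction j with
    | zero =>
      intro k hk hndown
      apply hpure _ _ hndown
      rintro ⟨k', hk', -⟩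
      have := k'.isLt
      omega
    | succ j ih =>
      intro k hk hndown
      by_cases hu : ∃ k' : Fin Km, k'.val = k.val + 1 ∧
          ∃ n' : Fin N, (k'.val * N + n'.val) / M = (k.val * N + n.val) / M
      · obtain ⟨k', hk', hQ'⟩ := hu
        have h1 := hup k k' hk' hQ'
        have hndown' : ¬∃ k'' : Fin Km, k''.val + 1 = k'.val ∧
            ∃ n' : Fin N, (k''.val * N + n'.val) / M = (k'.val * N + n.val) / M := by
          rintro ⟨k'', hk'', hQ''⟩
          have hkk : k'' = k := Fin.ext (by omega)
          rw [hkk] at hQ''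
          exact hNoUD k k' hk' hQ' hQ''
        have h2 := ih k' (by have := k'.isLt; omega) hndown'
        rw [h2, add_zero] at h1
        exact h1
      · exact hpure k hu hndown
  intro k
  by_cases hu : ∃ k' : Fin Km, k'.val = k.val + 1 ∧
      ∃ n' : Fin N, (k'.val * N + n'.val) / M = (k.val * N + n.val) / M
  · apply hB Km k (by omega)
    rintro ⟨k', hk', hQ'⟩
    obtain ⟨k'', hk'', hQ''⟩ := hu
    exact hExcl k k'' k' hk'' hk' hQ'' hQ'
  · exact hA k.val k le_rfl hu

/-- Theorem 2 (achievability): with `K ≥ 2`, `1 ≤ M < N`, and `g_1,…,g_N ∈ ℂ^M`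
such that every subfamily of at most `M` of them is linearly independent,
setting `τ3 = ⌈(K-1)·N/M⌉` there exist pilot symbols `a k i ∈ {0,1}` and
reflection coefficients `φ n i ∈ {0,1}` making the Phase III observation map
injective. -/
theorem phaseIII_achievability_MltN
    (K M N : ℕ) (hK : 2 ≤ K) (hM : 1 ≤ M) (hMN : M < N)
    (g : Fin N → Fin M → ℂ)
    (hg : ∀ s : Finset (Fin N), s.card ≤ M →
      LinearIndependent ℂ (fun n : s => g (n : Fin N)))
    (τ3 : ℕ) (hτ3 : τ3 = ⌈(((K - 1) * N : ℕ) : ℚ) / (M : ℚ)⌉₊) :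
    ∃ (a : Fin (K - 1) → Fin τ3 → ℂ) (φ : Fin N → Fin τ3 → ℂ),
      (∀ k i, a k i = 0 ∨ a k i = 1) ∧
      (∀ n i, φ n i = 0 ∨ φ n i = 1) ∧
      Function.Injective
        (fun lam : Matrix (Fin (K - 1)) (Fin N) ℂ =>
          fun (i : Fin τ3) (m : Fin M) =>
            ∑ k : Fin (K - 1), ∑ n : Fin N, φ n i * a k i * lam k n * g n m) := by
  classical
  have hM0 : 0 < M := hM
  have hbudget : (K - 1) * N ≤ τ3 * M := by
    have h2 : (((K - 1) * N : ℕ) : ℚ) / (M : ℚ) ≤ (τ3 : ℚ) := by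
      rw [hτ3]; exact Nat.le_ceil _
    have hMq : (0 : ℚ) < (M : ℚ) := by exact_mod_cast hM0
    rw [div_le_iff₀ hMq] at h2
    exact_mod_cast h2
  have hslot_lt : ∀ (k : Fin (K - 1)) (n : Fin N), (k.val * N + n.val) / M < τ3 := by
    intro k n
    rw [Nat.div_lt_iff_lt_mul hM0]
    have h1 : k.val * N + n.val < k.val * N + N := Nat.add_lt_add_left n.isLt _
    have h2 : k.val * N + N = (k.val + 1) * N := by ring
    have h3 : (k.val + 1) * N ≤ (K - 1) * N := Nat.mul_le_mul_right N (by have := k.isLt; omega)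
    exact lt_of_lt_of_le (lt_of_lt_of_le (h2 ▸ h1) h3) hbudget
  refine ⟨fun k i => if ∃ n : Fin N, (k.val * N + n.val) / M = i.val then 1 else 0,
      fun n i => if ∃ k : Fin (K - 1), (k.val * N + n.val) / M = i.val then 1 else 0,
      ?_, ?_, ?_⟩
  · intro k i
    by_cases h : ∃ n : Fin N, (k.val * N + n.val) / M = i.val
    · right; simp [h]
    · left; simp [h]
  · intro n i
    by_cases h : ∃ k : Fin (K - 1), (k.val * N + n.val) / M = i.val
    · right; simp [h]
    · left; simp [h]
  · intro x y hxy
    set d : Fin (K - 1) → Fin N → ℂ := fun k n => x k n - y k n with hd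
    have hE : ∀ (i : Fin τ3) (m : Fin M),
        ∑ k : Fin (K - 1), ∑ n : Fin N,
          (if ∃ k' : Fin (K - 1), (k'.val * N + n.val) / M = i.val then (1:ℂ) else 0) *
          (if ∃ n' : Fin N, (k.val * N + n'.val) / M = i.val then (1:ℂ) else 0) *
          d k n * g n m = 0 := by
      intro i m
      have h1 : (∑ k : Fin (K - 1), ∑ n : Fin N,
          (if ∃ k' : Fin (K - 1), (k'.val * N + n.val) / M = i.val then (1:ℂ) else 0) *
          (if ∃ n' : Fin N, (k.val * N + n'.val) / M = i.val then (1:ℂ) else 0) *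
          x k n * g n m)
          = ∑ k : Fin (K - 1), ∑ n : Fin N,
          (if ∃ k' : Fin (K - 1), (k'.val * N + n.val) / M = i.val then (1:ℂ) else 0) *
          (if ∃ n' : Fin N, (k.val * N + n'.val) / M = i.val then (1:ℂ) else 0) *
          y k n * g n m := congrFun (congrFun hxy i) m
      simp only [hd]
      have h2 : ∀ (k : Fin (K - 1)) (n : Fin N),
          (if ∃ k' : Fin (K - 1), (k'.val * N + n.val) / M = i.val then (1:ℂ) else 0) *
          (if ∃ n' : Fin N, (k.val * N + n'.val) / M = i.val then (1:ℂ) else 0) *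
          (x k n - y k n) * g n m
          = (if ∃ k' : Fin (K - 1), (k'.val * N + n.val) / M = i.val then (1:ℂ) else 0) *
          (if ∃ n' : Fin N, (k.val * N + n'.val) / M = i.val then (1:ℂ) else 0) *
          x k n * g n m -
          (if ∃ k' : Fin (K - 1), (k'.val * N + n.val) / M = i.val then (1:ℂ) else 0) *
          (if ∃ n' : Fin N, (k.val * N + n'.val) / M = i.val then (1:ℂ) else 0) *
          y k n * g n m := by intro k n; ring
      simp only [h2, Finset.sum_sub_distrib]
      rw [h1, sub_self]
    have key : ∀ (k : Fin (K - 1)) (n : Fin N),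
        ∑ k' : Fin (K - 1),
          (if ∃ n' : Fin N, (k'.val * N + n'.val) / M = (k.val * N + n.val) / M
            then (1:ℂ) else 0) * d k' n = 0 := by
      intro k n
      set i : Fin τ3 := ⟨(k.val * N + n.val) / M, hslot_lt k n⟩ with hi
      set s : Finset (Fin N) :=
        Finset.univ.filter (fun n' => ∃ k' : Fin (K - 1), (k'.val * N + n'.val) / M = i.val)
        with hs
      have hcard : s.card ≤ M := by
        have hle : s.card ≤ (Finset.range M).card := by
          apply Finset.card_le_card_of_injOn (fun n' =>
            if h : ∃ k' : Fin (K - 1), (k'.val * N + n'.val) / M = i.val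
            then (h.choose.val * N + n'.val) % M else 0)
          · intro n' hn'
            have hP : ∃ k' : Fin (K - 1), (k'.val * N + n'.val) / M = i.val := by
              simpa [hs] using hn'
            simp only [dif_pos hP]
            exact Finset.mem_range.mpr (Nat.mod_lt _ hM0)
          · intro n1 h1 n2 h2 hf
            have hP1 : ∃ k' : Fin (K - 1), (k'.val * N + n1.val) / M = i.val := by
              simpa [hs] using h1
            have hP2 : ∃ k' : Fin (K - 1), (k'.val * N + n2.val) / M = i.val := by
              simpa [hs] using h2
            simp only at hf
            rw [dif_pos hP1, dif_pos hP2] at hf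
            have e1 := hP1.choose_spec
            have e2 := hP2.choose_spec
            have heqn : hP1.choose.val * N + n1.val = hP2.choose.val * N + n2.val := by
              conv_lhs => rw [← Nat.div_add_mod (hP1.choose.val * N + n1.val) M]
              conv_rhs => rw [← Nat.div_add_mod (hP2.choose.val * N + n2.val) M]
              rw [e1, e2, hf]
            exact Fin.ext (p3_pair_inj n1.isLt n2.isLt heqn).2
        simpa using hle
      have hli := hg s hcard
      set F : Fin N → ℂ := fun n' =>
        if ∃ k' : Fin (K - 1), (k'.val * N + n'.val) / M = i.val
        then ∑ k' : Fin (K - 1),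
          (if ∃ n'' : Fin N, (k'.val * N + n''.val) / M = i.val then (1:ℂ) else 0) * d k' n'
        else 0 with hF
      have hFsum : ∑ n' : Fin N, F n' • g n' = 0 := by
        funext m
        have h2 := hE i m
        rw [Finset.sum_comm] at h2
        simp only [Finset.sum_apply, Pi.smul_apply, Pi.zero_apply, smul_eq_mul]
        refine Eq.trans ?_ h2
        apply Finset.sum_congr rfl
        intro n' _
        by_cases hP : ∃ k' : Fin (K - 1), (k'.val * N + n'.val) / M = i.val
        · have hFn : F n' = ∑ k' : Fin (K - 1),
              (if ∃ n'' : Fin N, (k'.val * N + n''.val) / M = i.val then (1:ℂ) else 0) *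
                d k' n' := by
            simp only [hF]
            rw [if_pos hP]
          rw [hFn, Finset.sum_mul]
          apply Finset.sum_congr rfl
          intro k' _
          by_cases hA : ∃ n'' : Fin N, (k'.val * N + n''.val) / M = i.val
          · rw [if_pos hA, if_pos hP]; ring
          · rw [if_neg hA, if_pos hP]; ring
        · simp [hF, hP]
      have hzero : ∀ n' ∈ s, F n' = 0 := by
        have h3 := Fintype.linearIndependent_iff.mp hli (fun z => F z.val) ?_
        · intro n' hn'
          exact h3 ⟨n', hn'⟩
        · have h4 : ∑ z : {z // z ∈ s}, F z.val • g z.val = ∑ n' ∈ s, F n' • g n' :=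
            Finset.sum_coe_sort s (fun n' => F n' • g n')
          rw [h4]
          rw [Finset.sum_subset (Finset.subset_univ s) ?van]
          · exact hFsum
          case van =>
            intro n' _ hn'
            have hP : ¬∃ k' : Fin (K - 1), (k'.val * N + n'.val) / M = i.val := by
              simpa [hs] using hn'
            simp [hF, hP]
      have hns : n ∈ s := by
        simp only [hs, Finset.mem_filter, Finset.mem_univ, true_and]
        exact ⟨k, rfl⟩
      have h5 := hzero n hns
      rw [hF] at h5
      simp only at h5
      rw [if_pos (⟨k, rfl⟩ : ∃ k' : Fin (K - 1), (k'.val * N + n.val) / M = i.val)] at h5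
      exact h5
    funext k n
    have h6 := p3_comb hM0 hMN n (fun k' => d k' n) (fun k'' => key k'' n) k
    exact sub_eq_zero.mp h6
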